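/- Let A > 2 and consider a four-body planar configuration in kite position: q_1 = (−x_2, 0), q_2 = (x_2, 0), q_3 = (0, y_3), q_4 = (0, y_4) with x_2 > 0, y_3 > y_4, the four points distinct, and positive masses m_1, m_2, m_3, m_4. If this configuration is a critical point of f = M I/2 + U/(A−2) (i.e., it is a central configuration), then m_1 = m_2. -/

import Mathlib

noncomputable section

open Finset

/-- A point in the Euclidean plane with the given coordinates. -/
def pt (a b : ℝ) : EuclideanSpace ℝ (Fin 2) := (WithLp.equiv 2 (Fin 2 → ℝ)).symm ![a, b]

/-- The configuration space of `n` planar points, identified with `ℝ^{2n}`. -/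
abbrev Conf (n : ℕ) := Fin n → EuclideanSpace ℝ (Fin 2)

/-- The twist vector `v_{i,j}`: its only nonzero components are
`(v_{i,j})_{x_i} = m_j (y_i - y_j)`, `(v_{i,j})_{y_i} = -m_j (x_i - x_j)`,
`(v_{i,j})_{x_j} = -m_i (y_i - y_j)`, `(v_{i,j})_{y_j} = m_i (x_i - x_j)`. -/
def twist {n : ℕ} (m : Fin n → ℝ) (q : Conf n) (i j : Fin n) : Conf n :=
  fun k =>
    if k = i then pt (m j * (q i 1 - q j 1)) (-(m j * (q i 0 - q j 0)))
    else if k = j then pt (-(m i * (q i 1 - q j 1))) (m i * (q i 0 - q j 0))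
    else 0

/-- The dot product on the configuration space `ℝ^{2n}`. -/
def dot {n : ℕ} (v w : Conf n) : ℝ := ∑ k, ∑ t, v k t * w k t

/-- Twice the signed area `Λ_{i,j,k}` of the triangle `q_i q_j q_k`. -/
def lam {n : ℕ} (q : Conf n) (i j k : Fin n) : ℝ :=
  (q i 0 - q j 0) * (q i 1 - q k 1) - (q i 0 - q k 0) * (q i 1 - q j 1)

/-- The moment of inertia about the center of mass. -/
def Ifun {n : ℕ} (m : Fin n → ℝ) (q : Conf n) : ℝ :=
  ∑ i, m i * ‖q i - (∑ i, m i)⁻¹ • ∑ j, m j • q j‖ ^ 2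

/-- The homogeneous potential `U = ∑_{i<j} m_i m_j r_{i,j}^{2-A}`. -/
def Ufun {n : ℕ} (A : ℝ) (m : Fin n → ℝ) (q : Conf n) : ℝ :=
  ∑ p ∈ Finset.univ.filter (fun p : Fin n × Fin n => p.1 < p.2),
    m p.1 * m p.2 * ‖q p.1 - q p.2‖ ^ (2 - A)

/-- `f = M I / 2 + U / (A - 2)`. -/
def fFun {n : ℕ} (A : ℝ) (m : Fin n → ℝ) (q : Conf n) : ℝ :=
  (∑ i, m i) * Ifun m q / 2 + Ufun A m q / (A - 2)

/-- The Hessian of `f` at `q`, as a bilinear form: `v ᵀ H w`. -/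
def hess {n : ℕ} (A : ℝ) (m : Fin n → ℝ) (q : Conf n) (v w : Conf n) : ℝ :=
  fderiv ℝ (fderiv ℝ (fFun A m)) q v w

section KiteAux
open RealInnerProductSpace

-- differentiability
lemma fFun_diffAt {n : ℕ} (A : ℝ) (m : Fin n → ℝ) (q : Conf n)
    (hsep : ∀ p : Fin n × Fin n, p.1 < p.2 → q p.1 ≠ q p.2) :
    DifferentiableAt ℝ (fFun A m) q := by
  have hproj : ∀ i : Fin n, DifferentiableAt ℝ (fun q : Conf n => q i) q := by
    intro i
    exact (ContinuousLinearMap.proj (R := ℝ) (φ := fun _ : Fin n => EuclideanSpace ℝ (Fin 2))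
      i).differentiableAt
  have hI : DifferentiableAt ℝ (Ifun m) q := by
    unfold Ifun
    apply DifferentiableAt.fun_sum
    intro i _
    apply DifferentiableAt.const_mul
    apply DifferentiableAt.norm_sq (𝕜 := ℝ)
    apply DifferentiableAt.sub (hproj i)
    apply DifferentiableAt.fun_const_smul
    exact DifferentiableAt.fun_sum (fun j _ => (hproj j).fun_const_smul (m j))
  have hU : DifferentiableAt ℝ (Ufun A m) q := by
    unfold Ufun
    apply DifferentiableAt.fun_sum
    intro p hp
    apply DifferentiableAt.const_mul
    apply DifferentiableAt.rpow_const
    · exact DifferentiableAt.norm (𝕜 := ℝ) ((hproj p.1).sub (hproj p.2))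
        (sub_ne_zero.mpr (hsep p (by simpa using hp)))
    · left
      simp only [ne_eq, norm_eq_zero]
      exact sub_ne_zero.mpr (hsep p (by simpa using hp))
  unfold fFun
  simp only [div_eq_mul_inv]
  exact ((hI.const_mul _).mul_const _).add (hU.mul_const _)

variable {E' : Type*} [NormedAddCommGroup E'] [InnerProductSpace ℝ E']

lemma lineDeriv' (u w : E') : HasDerivAt (fun t : ℝ => u + t • w) w 0 := by
  simpa using ((hasDerivAt_id (0:ℝ)).smul_const w).const_add u

lemma sqDeriv (u w : E') : HasDerivAt (fun t : ℝ => ‖u + t • w‖ ^ 2) (2 * ⟪u, w⟫) 0 := by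
  have h := (lineDeriv' u w).norm_sq
  simpa [real_inner_comm, two_mul] using h

lemma rpowDeriv (A : ℝ) (u w : E') (hu : u ≠ 0) :
    HasDerivAt (fun t : ℝ => ‖u + t • w‖ ^ (2 - A)) ((2 - A) * ‖u‖ ^ (-A) * ⟪u, w⟫) 0 := by
  have h0 : (0:ℝ) < ⟪u, u⟫ := by
    rw [real_inner_self_eq_norm_sq]
    exact pow_pos (norm_pos_iff.mpr hu) 2
  have hg : HasDerivAt (fun t : ℝ => ⟪u + t • w, u + t • w⟫) (2 * ⟪u, w⟫) 0 := by
    have := (lineDeriv' u w).inner ℝ (lineDeriv' u w)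
    simpa [real_inner_comm, two_mul] using this
  have h2 := hg.rpow_const (p := (2 - A) / 2)
    (by simp only [zero_smul, add_zero]; exact Or.inl (ne_of_gt h0))
  simp only [zero_smul, add_zero] at h2
  have hfun : (fun t : ℝ => ⟪u + t • w, u + t • w⟫ ^ ((2 - A) / 2))
      = fun t : ℝ => ‖u + t • w‖ ^ (2 - A) := by
    funext t
    rw [real_inner_self_eq_norm_sq, ← Real.rpow_natCast ‖u + t • w‖ 2,
      ← Real.rpow_mul (norm_nonneg _), show ((2:ℕ):ℝ) * ((2 - A) / 2) = 2 - A by push_cast; ring]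
  have hval : 2 * ⟪u, w⟫ * ((2 - A) / 2) * ⟪u, u⟫ ^ ((2 - A) / 2 - 1)
      = (2 - A) * ‖u‖ ^ (-A) * ⟪u, w⟫ := by
    rw [real_inner_self_eq_norm_sq, ← Real.rpow_natCast ‖u‖ 2,
      ← Real.rpow_mul (norm_nonneg _), show ((2:ℕ):ℝ) * ((2 - A) / 2 - 1) = -A by push_cast; ring]
    ring
  rw [hfun, hval] at h2
  exact h2

lemma central_eq {n : ℕ} (A : ℝ) (hA : 2 < A) (m : Fin n → ℝ) (hM : (∑ i, m i) ≠ 0)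
    (q : Conf n) (hsep : ∀ p : Fin n × Fin n, p.1 < p.2 → q p.1 ≠ q p.2)
    (hcrit : fderiv ℝ (fFun A m) q = 0) (v : Conf n) :
    (∑ i, m i * ((∑ j, m j) * ⟪q i, v i⟫ - ⟪∑ j, m j • q j, v i⟫))
      - ∑ p ∈ Finset.univ.filter (fun p : Fin n × Fin n => p.1 < p.2),
          m p.1 * m p.2 * ‖q p.1 - q p.2‖ ^ (-A) * ⟪q p.1 - q p.2, v p.1 - v p.2⟫ = 0 := by
  have hA2 : A - 2 ≠ 0 := by linarith
  have hF : HasFDerivAt (fFun A m) (0 : Conf n →L[ℝ] ℝ) q := by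
    have := (fFun_diffAt A m q hsep).hasFDerivAt
    rwa [hcrit] at this
  have hL : HasDerivAt (fun t : ℝ => q + t • v) v 0 := by
    simpa using ((hasDerivAt_id (0:ℝ)).smul_const v).const_add q
  have hzero : HasDerivAt (fun t : ℝ => fFun A m (q + t • v)) 0 0 := by
    have hF' : HasFDerivAt (fFun A m) (0 : Conf n →L[ℝ] ℝ) (q + (0:ℝ) • v) := by
      simpa using hF
    have := hF'.comp_hasDerivAt 0 hL
    rw [ContinuousLinearMap.zero_apply] at this
    exact this
  set M : ℝ := ∑ i, m i with hMdef
  set S : EuclideanSpace ℝ (Fin 2) := ∑ j, m j • q j with hSdef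
  set Sv : EuclideanSpace ℝ (Fin 2) := ∑ j, m j • v j with hSvdef
  set c : EuclideanSpace ℝ (Fin 2) := M⁻¹ • S with hcdef
  set cv : EuclideanSpace ℝ (Fin 2) := M⁻¹ • Sv with hcvdef
  -- I part
  have hIeq : (fun t : ℝ => Ifun m (q + t • v))
      = fun t : ℝ => ∑ i, m i * ‖(q i - c) + t • (v i - cv)‖ ^ 2 := by
    funext t
    unfold Ifun
    apply Finset.sum_congr rfl
    intro i _
    have hsum : ∑ j, m j • (q + t • v) j = S + t • Sv := by
      simp only [Pi.add_apply, Pi.smul_apply, smul_add, hSdef, hSvdef]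
      rw [Finset.sum_add_distrib]
      congr 1
      rw [Finset.smul_sum]
      exact Finset.sum_congr rfl fun j _ => smul_comm _ _ _
    have harg : (q + t • v) i - (∑ i, m i)⁻¹ • ∑ j, m j • (q + t • v) j
        = (q i - c) + t • (v i - cv) := by
      rw [hsum, ← hMdef]
      simp only [Pi.add_apply, Pi.smul_apply, hcdef, hcvdef]
      module
    rw [harg]
  have hI : HasDerivAt (fun t : ℝ => Ifun m (q + t • v))
      (∑ i, m i * (2 * ⟪q i - c, v i - cv⟫)) 0 := by
    rw [hIeq]
    exact HasDerivAt.fun_sum fun i _ => (sqDeriv _ _).const_mul (m i)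
  -- U part
  have hUeq : (fun t : ℝ => Ufun A m (q + t • v))
      = fun t : ℝ => ∑ p ∈ Finset.univ.filter (fun p : Fin n × Fin n => p.1 < p.2),
          m p.1 * m p.2 * ‖(q p.1 - q p.2) + t • (v p.1 - v p.2)‖ ^ (2 - A) := by
    funext t
    unfold Ufun
    apply Finset.sum_congr rfl
    intro p _
    have harg : (q + t • v) p.1 - (q + t • v) p.2
        = (q p.1 - q p.2) + t • (v p.1 - v p.2) := by
      simp only [Pi.add_apply, Pi.smul_apply]
      module
    rw [harg]
  have hU : HasDerivAt (fun t : ℝ => Ufun A m (q + t • v))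
      (∑ p ∈ Finset.univ.filter (fun p : Fin n × Fin n => p.1 < p.2),
        m p.1 * m p.2 * ((2 - A) * ‖q p.1 - q p.2‖ ^ (-A)
          * ⟪q p.1 - q p.2, v p.1 - v p.2⟫)) 0 := by
    rw [hUeq]
    apply HasDerivAt.fun_sum
    intro p hp
    exact (rpowDeriv A _ _ (sub_ne_zero.mpr (hsep p (by simpa using hp)))).const_mul _
  have hTot : HasDerivAt (fun t : ℝ => fFun A m (q + t • v))
      (M * (∑ i, m i * (2 * ⟪q i - c, v i - cv⟫)) / 2
        + (∑ p ∈ Finset.univ.filter (fun p : Fin n × Fin n => p.1 < p.2),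
            m p.1 * m p.2 * ((2 - A) * ‖q p.1 - q p.2‖ ^ (-A)
              * ⟪q p.1 - q p.2, v p.1 - v p.2⟫)) / (A - 2)) 0 := by
    have h1 := (hI.const_mul M).div_const 2
    have h2 := hU.div_const (A - 2)
    have hfe : (fun t : ℝ => fFun A m (q + t • v))
        = fun t : ℝ => M * Ifun m (q + t • v) / 2 + Ufun A m (q + t • v) / (A - 2) := rfl
    rw [hfe]
    exact h1.add h2
  have hD := hzero.unique hTot
  -- algebra
  have hz : ∑ i, m i • (q i - c) = (0 : EuclideanSpace ℝ (Fin 2)) := by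
    simp only [smul_sub]
    rw [Finset.sum_sub_distrib, ← Finset.sum_smul, ← hSdef, ← hMdef, hcdef, smul_smul,
      mul_inv_cancel₀ hM, one_smul, sub_self]
  have hz2 : ∑ i, m i * ⟪q i - c, cv⟫ = 0 := by
    have h1 : ∀ i ∈ (univ : Finset (Fin n)), m i * ⟪q i - c, cv⟫ = ⟪m i • (q i - c), cv⟫ :=
      fun i _ => (real_inner_smul_left _ _ _).symm
    rw [Finset.sum_congr rfl h1, ← sum_inner, hz, inner_zero_left]
  have e2 : M * (∑ i, m i * (2 * ⟪q i - c, v i - cv⟫)) / 2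
      = ∑ i, m i * (M * ⟪q i, v i⟫ - ⟪S, v i⟫) := by
    have h1 : ∑ i, m i * (2 * ⟪q i - c, v i - cv⟫)
        = 2 * (∑ i, m i * ⟪q i - c, v i⟫) - 2 * (∑ i, m i * ⟪q i - c, cv⟫) := by
      rw [Finset.mul_sum, Finset.mul_sum, ← Finset.sum_sub_distrib]
      refine Finset.sum_congr rfl fun i _ => ?_
      rw [inner_sub_right]
      ring
    rw [h1, hz2, mul_zero, sub_zero,
      show M * (2 * (∑ i, m i * ⟪q i - c, v i⟫)) / 2 = M * ∑ i, m i * ⟪q i - c, v i⟫ from by ring,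
      Finset.mul_sum]
    refine Finset.sum_congr rfl fun i _ => ?_
    rw [inner_sub_left, hcdef, real_inner_smul_left]
    have hMi : M * M⁻¹ = 1 := mul_inv_cancel₀ hM
    linear_combination (-(m i * ⟪S, v i⟫)) * hMi
  have e1 : ∑ p ∈ Finset.univ.filter (fun p : Fin n × Fin n => p.1 < p.2),
        m p.1 * m p.2 * ((2 - A) * ‖q p.1 - q p.2‖ ^ (-A) * ⟪q p.1 - q p.2, v p.1 - v p.2⟫)
      = (2 - A) * ∑ p ∈ Finset.univ.filter (fun p : Fin n × Fin n => p.1 < p.2),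
          m p.1 * m p.2 * ‖q p.1 - q p.2‖ ^ (-A) * ⟪q p.1 - q p.2, v p.1 - v p.2⟫ := by
    rw [Finset.mul_sum]
    exact Finset.sum_congr rfl fun p _ => by ring
  rw [e2, e1] at hD
  have h3 : ((2 - A) * ∑ p ∈ Finset.univ.filter (fun p : Fin n × Fin n => p.1 < p.2),
        m p.1 * m p.2 * ‖q p.1 - q p.2‖ ^ (-A) * ⟪q p.1 - q p.2, v p.1 - v p.2⟫) / (A - 2)
      = -∑ p ∈ Finset.univ.filter (fun p : Fin n × Fin n => p.1 < p.2),
          m p.1 * m p.2 * ‖q p.1 - q p.2‖ ^ (-A) * ⟪q p.1 - q p.2, v p.1 - v p.2⟫ := by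
    field_simp
    ring
  rw [h3] at hD
  linarith [hD]

lemma pt_sub (a b c d : ℝ) : pt a b - pt c d = pt (a-c) (b-d) := by
  ext i; fin_cases i <;> simp [pt]
lemma pt_add (a b c d : ℝ) : pt a b + pt c d = pt (a+c) (b+d) := by
  ext i; fin_cases i <;> simp [pt]
lemma pt_smul (r a b : ℝ) : r • pt a b = pt (r*a) (r*b) := by
  ext i; fin_cases i <;> simp [pt]
lemma pt_inner (a b c d : ℝ) : ⟪pt a b, pt c d⟫ = a*c + b*d := by
  simp [pt, PiLp.inner_apply, Fin.sum_univ_two, RCLike.inner_apply]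
  ring
lemma pt_norm (a b : ℝ) : ‖pt a b‖ = Real.sqrt (a^2 + b^2) := by
  simp [EuclideanSpace.norm_eq, pt, Fin.sum_univ_two, Real.norm_eq_abs, sq_abs]


lemma rpow_negA_one (A : ℝ) (hA : 2 < A) (x : ℝ) (hxn : 0 ≤ x)
    (h : Real.sqrt x ^ (-A) = 1) : x = 1 := by
  have hs : Real.sqrt x ≠ 0 := by
    intro h0
    rw [h0, Real.zero_rpow (by linarith : -A ≠ 0)] at h
    norm_num at h
  have hpos : 0 < Real.sqrt x := lt_of_le_of_ne (Real.sqrt_nonneg x) (Ne.symm hs)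
  have hlog : Real.log (Real.sqrt x ^ (-A)) = -A * Real.log (Real.sqrt x) :=
    Real.log_rpow hpos (-A)
  rw [h, Real.log_one] at hlog
  have hl0 : Real.log (Real.sqrt x) = 0 := by
    rcases mul_eq_zero.mp hlog.symm with h' | h'
    · exfalso
      have : A = 0 := by linarith [neg_eq_zero.mp h']
      linarith
    · exact h'
  have hone : Real.sqrt x = 1 := by
    rcases Real.log_eq_zero.mp hl0 with h' | h' | h'
    · exact absurd h' hs
    · exact h'
    · linarith
  nlinarith [Real.sq_sqrt hxn, hone]

lemma factor_zero (a b : ℝ) (h : a * b = 0) (ha : a ≠ 0) : b = 0 := by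
  rcases mul_eq_zero.mp h with h' | h'
  · exact absurd h' ha
  · exact h'

end KiteAux

set_option maxHeartbeats 2000000

open RealInnerProductSpace in
/-- A four-body central configuration in kite position
`q₁ = (-x₂, 0)`, `q₂ = (x₂, 0)`, `q₃ = (0, y₃)`, `q₄ = (0, y₄)` with `x₂ > 0`,
`y₃ > y₄`, distinct points and positive masses, has `m₁ = m₂`. -/
theorem kite_central_config_equal_masses (A : ℝ) (hA : 2 < A)
    (m : Fin 4 → ℝ) (hm : ∀ i, 0 < m i) (x₂ y₃ y₄ : ℝ)
    (hx : 0 < x₂) (hy : y₄ < y₃) (q : Conf 4)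
    (hq0 : q 0 = pt (-x₂) 0) (hq1 : q 1 = pt x₂ 0)
    (hq2 : q 2 = pt 0 y₃) (hq3 : q 3 = pt 0 y₄)
    (hq : Function.Injective q)
    (hcrit : fderiv ℝ (fFun A m) q = 0) :
    m 0 = m 1 := by

  have hM : (∑ i, m i) ≠ 0 := by
    rw [Fin.sum_univ_four]
    have := hm 0; have := hm 1; have := hm 2; have := hm 3
    positivity
  have hsep : ∀ p : Fin 4 × Fin 4, p.1 < p.2 → q p.1 ≠ q p.2 :=
    fun p hp h => absurd (hq h) (ne_of_lt hp)
  have hEa := central_eq A hA m hM q hsep hcrit ![pt 0 0, pt 0 0, pt 1 0, pt 0 0]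
  rw [Finset.sum_filter, Fintype.sum_prod_type] at hEa
  simp only [Fin.sum_univ_four, hq0, hq1, hq2, hq3, Matrix.cons_val_zero, Matrix.cons_val_one,
    Matrix.head_cons, Matrix.cons_val_two, Matrix.cons_val_three, Matrix.tail_cons,
    pt_smul, pt_add, pt_sub, pt_inner, pt_norm] at hEa
  simp only [show ∀ (i : Fin 4), (i < i) = False from by decide, decide_eq_true_eq] at hEa
  norm_num [(by decide : ((0:Fin 4) < 1) = True), (by decide : ((0:Fin 4) < 2) = True), (by decide : ((0:Fin 4) < 3) = True), (by decide : ((1:Fin 4) < 2) = True), (by decide : ((1:Fin 4) < 3) = True), (by decide : ((2:Fin 4) < 3) = True), (by decide : ((1:Fin 4) < 0) = False), (by decide : ((2:Fin 4) < 0) = False), (by decide : ((3:Fin 4) < 0) = False), (by decide : ((2:Fin 4) < 1) = False), (by decide : ((3:Fin 4) < 1) = False), (by decide : ((3:Fin 4) < 2) = False)] at hEa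
  have hEb := central_eq A hA m hM q hsep hcrit ![pt 0 0, pt 0 0, pt 0 0, pt 1 0]
  have hEc := central_eq A hA m hM q hsep hcrit ![pt 1 0, pt (-1) 0, pt 0 0, pt 0 0]
  have hEd := central_eq A hA m hM q hsep hcrit ![pt 0 0, pt 0 0, pt 0 1, pt 0 0]
  rw [Finset.sum_filter, Fintype.sum_prod_type] at hEb hEc hEd
  simp only [Fin.sum_univ_four, hq0, hq1, hq2, hq3, Matrix.cons_val_zero, Matrix.cons_val_one,
    Matrix.head_cons, Matrix.cons_val_two, Matrix.cons_val_three, Matrix.tail_cons,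
    pt_smul, pt_add, pt_sub, pt_inner, pt_norm] at hEb hEc hEd
  simp only [show ∀ (i : Fin 4), (i < i) = False from by decide, decide_eq_true_eq] at hEb hEc hEd
  norm_num [(by decide : ((0:Fin 4) < 1) = True), (by decide : ((0:Fin 4) < 2) = True), (by decide : ((0:Fin 4) < 3) = True), (by decide : ((1:Fin 4) < 2) = True), (by decide : ((1:Fin 4) < 3) = True), (by decide : ((2:Fin 4) < 3) = True), (by decide : ((1:Fin 4) < 0) = False), (by decide : ((2:Fin 4) < 0) = False), (by decide : ((3:Fin 4) < 0) = False), (by decide : ((2:Fin 4) < 1) = False), (by decide : ((3:Fin 4) < 1) = False), (by decide : ((3:Fin 4) < 2) = False)] at hEb hEc hEd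
  -- name the four interaction strengths
  obtain ⟨s3, hs3def⟩ : ∃ s : ℝ, s = Real.sqrt (x₂ ^ 2 + y₃ ^ 2) ^ (-A) := ⟨_, rfl⟩
  obtain ⟨s4, hs4def⟩ : ∃ s : ℝ, s = Real.sqrt (x₂ ^ 2 + y₄ ^ 2) ^ (-A) := ⟨_, rfl⟩
  obtain ⟨s12, hs12def⟩ : ∃ s : ℝ, s = Real.sqrt ((-x₂ - x₂) ^ 2) ^ (-A) := ⟨_, rfl⟩
  obtain ⟨s34, hs34def⟩ : ∃ s : ℝ, s = Real.sqrt ((y₃ - y₄) ^ 2) ^ (-A) := ⟨_, rfl⟩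
  rw [← hs3def] at hEa hEc hEd
  rw [← hs4def] at hEb hEc
  rw [← hs12def] at hEc
  rw [← hs34def] at hEd
  by_contra h01
  have hd : m 0 - m 1 ≠ 0 := sub_ne_zero.mpr h01
  have hm0 := hm 0; have hm1 := hm 1; have hm2 := hm 2; have hm3 := hm 3
  -- s3 = 1
  have k3 : m 2 * x₂ * (m 0 - m 1) * (1 - s3) = 0 := by linear_combination hEa
  have hs3 : s3 = 1 := by
    have := factor_zero _ _ k3 (mul_ne_zero (mul_ne_zero (ne_of_gt hm2) (ne_of_gt hx)) hd)
    linarith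
  -- s4 = 1
  have k4 : m 3 * x₂ * (m 0 - m 1) * (1 - s4) = 0 := by linear_combination hEb
  have hs4 : s4 = 1 := by
    have := factor_zero _ _ k4 (mul_ne_zero (mul_ne_zero (ne_of_gt hm3) (ne_of_gt hx)) hd)
    linarith
  -- s12 = 1
  have k12 : (4 * (m 0 * m 1) * x₂) * (s12 - 1) = 0 := by
    linear_combination hEc - ((m 0 + m 1) * m 2 * x₂) * hs3 - ((m 0 + m 1) * m 3 * x₂) * hs4
  have hs12 : s12 = 1 := by
    have := factor_zero _ _ k12 (by positivity)
    linarith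
  -- s34 = 1
  have k34 : (m 2 * m 3 * (y₃ - y₄)) * (1 - s34) = 0 := by
    linear_combination hEd + ((m 0 + m 1) * m 2 * y₃) * hs3
  have hs34 : s34 = 1 := by
    have hne : m 2 * m 3 * (y₃ - y₄) ≠ 0 := by
      have : 0 < y₃ - y₄ := by linarith
      positivity
    have := factor_zero _ _ k34 hne
    linarith
  -- convert to distance equations
  clear hEa hEb hEc hEd k3 k4 k12 k34 hcrit hq hq0 hq1 hq2 hq3 hsep hM h01 hd
  rw [hs3def] at hs3
  rw [hs4def] at hs4
  rw [hs12def] at hs12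
  rw [hs34def] at hs34
  have g3 : x₂ ^ 2 + y₃ ^ 2 = 1 := rpow_negA_one A hA _ (by positivity) hs3
  have g4 : x₂ ^ 2 + y₄ ^ 2 = 1 := rpow_negA_one A hA _ (by positivity) hs4
  have g12 : (-x₂ - x₂) ^ 2 = 1 := rpow_negA_one A hA _ (by positivity) hs12
  have g34 : (y₃ - y₄) ^ 2 = 1 := rpow_negA_one A hA _ (by positivity) hs34
  clear hs3 hs4 hs12 hs34
  -- contradiction
  have hx2 : x₂ ^ 2 = 1 / 4 := by nlinarith [g12]
  have hy3 : y₃ ^ 2 = 3 / 4 := by linarith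
  have hy4 : y₄ ^ 2 = 3 / 4 := by linarith
  have hprod : y₃ * y₄ = 1 / 4 := by nlinarith [g34]
  nlinarith [hy3, hy4, hprod]
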